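/- Let p be an odd prime, r ≥ 1 an integer, and D ∈ ℤ/p^rℤ a unit whose reduction modulo p is a non-square in ℤ/pℤ. Then the group (H_{D,ℤ/p^rℤ}, ⊗) is cyclic: there exists a point (a,b) ∈ H_{D,ℤ/p^rℤ} such that every solution of x² − D y² = 1 in ℤ/p^rℤ is an ⊗-power of (a,b). -/

import Mathlib

/-- The Brahmagupta (Pell) product on `R × R`. -/
def pellMul {R : Type*} [CommRing R] (D : R) (P Q : R × R) : R × R :=
  (P.1 * Q.1 + D * P.2 * Q.2, P.2 * Q.1 + P.1 * Q.2)

/-- `n`-th power with respect to the Brahmagupta product (identity `(1,0)`). -/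
def pellPow {R : Type*} [CommRing R] (D : R) (P : R × R) : ℕ → R × R
  | 0 => (1, 0)
  | n + 1 => pellMul D P (pellPow D P n)

/-- The Pell conic `H_{D,R} = {(x, y) : x² − D y² = 1}`. -/
def pellConic {R : Type*} [CommRing R] (D : R) : Set (R × R) :=
  {P | P.1 ^ 2 - D * P.2 ^ 2 = 1}

/-- The quadratic ring `R[√D]`. -/
@[ext]
structure Brah (R : Type*) (D : R) where
  re : R
  im : R
deriving DecidableEq

namespace Brah
variable {R : Type*} [CommRing R] {D : R}

instance : Zero (Brah R D) := ⟨⟨0, 0⟩⟩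
instance : One (Brah R D) := ⟨⟨1, 0⟩⟩
instance : Add (Brah R D) := ⟨fun a b => ⟨a.re + b.re, a.im + b.im⟩⟩
instance : Neg (Brah R D) := ⟨fun a => ⟨-a.re, -a.im⟩⟩
instance : Mul (Brah R D) := ⟨fun a b => ⟨a.re * b.re + D * a.im * b.im, a.im * b.re + a.re * b.im⟩⟩

@[simp] lemma zero_re : (0 : Brah R D).re = 0 := rfl
@[simp] lemma zero_im : (0 : Brah R D).im = 0 := rfl
@[simp] lemma one_re : (1 : Brah R D).re = 1 := rfl
@[simp] lemma one_im : (1 : Brah R D).im = 0 := rfl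
@[simp] lemma add_re (a b : Brah R D) : (a + b).re = a.re + b.re := rfl
@[simp] lemma add_im (a b : Brah R D) : (a + b).im = a.im + b.im := rfl
@[simp] lemma neg_re (a : Brah R D) : (-a).re = -a.re := rfl
@[simp] lemma neg_im (a : Brah R D) : (-a).im = -a.im := rfl
@[simp] lemma mul_re (a b : Brah R D) : (a * b).re = a.re * b.re + D * a.im * b.im := rfl
@[simp] lemma mul_im (a b : Brah R D) : (a * b).im = a.im * b.re + a.re * b.im := rfl

instance commRing : CommRing (Brah R D) where
  add_assoc a b c := by ext <;> simp <;> ring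
  zero_add a := by ext <;> simp
  add_zero a := by ext <;> simp
  add_comm a b := by ext <;> simp <;> ring
  neg_add_cancel a := by ext <;> simp
  mul_assoc a b c := by ext <;> simp <;> ring
  one_mul a := by ext <;> simp
  mul_one a := by ext <;> simp
  left_distrib a b c := by ext <;> simp <;> ring
  right_distrib a b c := by ext <;> simp <;> ring
  zero_mul a := by ext <;> simp
  mul_zero a := by ext <;> simp
  mul_comm a b := by ext <;> simp <;> ring
  natCast n := ⟨n, 0⟩
  natCast_zero := by ext <;> simp
  natCast_succ n := by ext <;> simp
  nsmul n a := ⟨n • a.re, n • a.im⟩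
  nsmul_zero a := by ext <;> exact AddMonoid.nsmul_zero _
  nsmul_succ n a := by ext <;> exact AddMonoid.nsmul_succ _ _
  zsmul n a := ⟨n • a.re, n • a.im⟩
  zsmul_zero' a := by ext <;> exact SubNegMonoid.zsmul_zero' _
  zsmul_succ' n a := by ext <;> exact SubNegMonoid.zsmul_succ' _ _
  zsmul_neg' n a := by ext <;> exact SubNegMonoid.zsmul_neg' _ _

@[simp] lemma natCast_re (n : ℕ) : (n : Brah R D).re = n := rfl
@[simp] lemma natCast_im (n : ℕ) : (n : Brah R D).im = 0 := rfl

/-- `R → R[√D]` as a ring hom. -/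
def C : R →+* Brah R D where
  toFun r := ⟨r, 0⟩
  map_one' := by ext <;> simp
  map_mul' a b := by ext <;> simp
  map_zero' := by ext <;> simp
  map_add' a b := by ext <;> simp

@[simp] lemma C_re (r : R) : (C r : Brah R D).re = r := rfl
@[simp] lemma C_im (r : R) : (C r : Brah R D).im = 0 := rfl

lemma C_mul_re (r : R) (a : Brah R D) : (C r * a).re = r * a.re := by simp
lemma C_mul_im (r : R) (a : Brah R D) : (C r * a).im = r * a.im := by simp

lemma dvd_iff (r : R) (a : Brah R D) : (C r : Brah R D) ∣ a ↔ r ∣ a.re ∧ r ∣ a.im := by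
  constructor
  · rintro ⟨b, rfl⟩
    exact ⟨⟨b.re, by simp⟩, ⟨b.im, by simp⟩⟩
  · rintro ⟨⟨u, hu⟩, ⟨v, hv⟩⟩
    exact ⟨⟨u, v⟩, by ext <;> simp [hu, hv]⟩

lemma natCast_eq_C (n : ℕ) : (n : Brah R D) = C (n : R) := by ext <;> simp

/-- componentwise map along a ring hom. -/
def map {S : Type*} [CommRing S] {D' : S} (f : R →+* S) (hf : f D = D') :
    Brah R D →+* Brah S D' where
  toFun a := ⟨f a.re, f a.im⟩
  map_one' := by ext <;> simp
  map_mul' a b := by ext <;> simp [← hf]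
  map_zero' := by ext <;> simp
  map_add' a b := by ext <;> simp

@[simp] lemma map_re {S : Type*} [CommRing S] {D' : S} (f : R →+* S) (hf : f D = D')
    (a : Brah R D) : (map f hf a).re = f a.re := rfl
@[simp] lemma map_im {S : Type*} [CommRing S] {D' : S} (f : R →+* S) (hf : f D = D')
    (a : Brah R D) : (map f hf a).im = f a.im := rfl

end Brah

section ConicGroup
variable {R : Type*} [CommRing R] (D : R)

lemma pellConic_mem_iff (P : R × R) : P ∈ pellConic D ↔ P.1 ^ 2 - D * P.2 ^ 2 = 1 := Iff.rfl

def pmul (P Q : ↥(pellConic D)) : ↥(pellConic D) :=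
  ⟨pellMul D P.val Q.val, by
    have hP := P.property; have hQ := Q.property
    rw [pellConic_mem_iff] at *
    show (P.val.1 * Q.val.1 + D * P.val.2 * Q.val.2) ^ 2
        - D * (P.val.2 * Q.val.1 + P.val.1 * Q.val.2) ^ 2 = 1
    calc (P.val.1 * Q.val.1 + D * P.val.2 * Q.val.2) ^ 2
          - D * (P.val.2 * Q.val.1 + P.val.1 * Q.val.2) ^ 2
        = (P.val.1 ^ 2 - D * P.val.2 ^ 2) * (Q.val.1 ^ 2 - D * Q.val.2 ^ 2) := by ring
      _ = 1 := by rw [hP, hQ, one_mul]⟩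

def pone : ↥(pellConic D) := ⟨(1, 0), by rw [pellConic_mem_iff]; simp⟩

def pinv (P : ↥(pellConic D)) : ↥(pellConic D) :=
  ⟨(P.val.1, -P.val.2), by
    have hP := P.property; rw [pellConic_mem_iff] at *; simpa using hP⟩

lemma pmul_def (P Q : ↥(pellConic D)) :
    (pmul D P Q).val = (P.val.1 * Q.val.1 + D * P.val.2 * Q.val.2,
      P.val.2 * Q.val.1 + P.val.1 * Q.val.2) := rfl

instance : Mul ↥(pellConic D) := ⟨pmul D⟩
instance : One ↥(pellConic D) := ⟨pone D⟩
instance : Inv ↥(pellConic D) := ⟨pinv D⟩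

lemma pmul_eq (P Q : ↥(pellConic D)) : P * Q = pmul D P Q := rfl
lemma pone_eq : (1 : ↥(pellConic D)) = pone D := rfl
lemma pinv_eq (P : ↥(pellConic D)) : P⁻¹ = pinv D P := rfl

instance pellGroup : CommGroup ↥(pellConic D) where
  mul := (· * ·)
  one := 1
  inv := (·⁻¹)
  mul_assoc a b c := by
    apply Subtype.ext
    simp only [pmul_eq, pmul_def]
    apply Prod.ext <;> simp <;> ring
  one_mul a := by
    apply Subtype.ext
    simp only [pmul_eq, pone_eq, pmul_def]
    apply Prod.ext <;> simp [pone]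
  mul_one a := by
    apply Subtype.ext
    simp only [pmul_eq, pone_eq, pmul_def]
    apply Prod.ext <;> simp [pone]
  inv_mul_cancel a := by
    have hP := a.property; rw [pellConic_mem_iff] at hP
    apply Subtype.ext
    simp only [pmul_eq, pinv_eq, pone_eq, pmul_def]
    apply Prod.ext <;> simp [pinv, pone]
    · linear_combination hP
    · ring
  mul_comm a b := by
    apply Subtype.ext
    simp only [pmul_eq, pmul_def]
    apply Prod.ext <;> simp <;> ring

@[simp] lemma pell_mul_val (a b : ↥(pellConic D)) :
    (a * b).val = pellMul D a.val b.val := rfl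
@[simp] lemma pell_one_val : (1 : ↥(pellConic D)).val = ((1 : R), (0 : R)) := rfl

lemma pellPow_eq_pow (a : ↥(pellConic D)) (n : ℕ) : pellPow D a.val n = (a ^ n).val := by
  induction n with
  | zero => simp [pellPow]
  | succ n ih => rw [pellPow, ih, pow_succ', pell_mul_val]

/-- the conic into the multiplicative monoid of `R[√D]`. -/
def conicToBrah : ↥(pellConic D) →* Brah R D where
  toFun P := ⟨P.val.1, P.val.2⟩
  map_one' := by ext <;> simp
  map_mul' a b := by ext <;> simp [pellMul] <;> ring

lemma conicToBrah_injective : Function.Injective (conicToBrah D) := by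
  intro a b h
  apply Subtype.ext; apply Prod.ext
  · exact congrArg Brah.re h
  · exact congrArg Brah.im h

end ConicGroup

section ZModLemmas
variable {p r : ℕ}

lemma zmod_pow_r_zero (hp : p.Prime) (hr : 1 ≤ r) : (p : ZMod (p^r))^r = 0 := by
  rw [← Nat.cast_pow, ZMod.natCast_self]

lemma zmod_ann_val (hp : p.Prime) (hr : 1 ≤ r) (a : ZMod (p^r))
    (h : (p : ZMod (p^r)) * a = 0) : p^(r-1) ∣ a.val := by
  haveI : NeZero (p^r) := ⟨pow_ne_zero r hp.ne_zero⟩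
  have ha : ((a.val : ℕ) : ZMod (p^r)) = a := by
    rw [ZMod.natCast_val, ZMod.cast_id]
  have h2 : ((p * a.val : ℕ) : ZMod (p^r)) = 0 := by push_cast [ha]; exact h
  rw [ZMod.natCast_eq_zero_iff] at h2
  have hr' : p ^ r = p * p^(r-1) := by
    conv_lhs => rw [show r = 1 + (r-1) by omega]
    rw [pow_add, pow_one]
  exact (Nat.mul_dvd_mul_iff_left hp.pos).mp (hr' ▸ h2)

lemma zmod_ann (hp : p.Prime) (hr : 1 ≤ r) (a : ZMod (p^r))
    (h : (p : ZMod (p^r)) * a = 0) : (p : ZMod (p^r))^(r-1) ∣ a := by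
  haveI : NeZero (p^r) := ⟨pow_ne_zero r hp.ne_zero⟩
  obtain ⟨c, hc⟩ := zmod_ann_val hp hr a h
  refine ⟨(c : ZMod (p^r)), ?_⟩
  have ha : ((a.val : ℕ) : ZMod (p^r)) = a := by
    rw [ZMod.natCast_val, ZMod.cast_id]
  rw [← ha, hc]; push_cast; ring

lemma zmod_p_dvd_of_cast_eq_zero (hp : p.Prime) (hr : 1 ≤ r) (dd : p ∣ p^r)
    (a : ZMod (p^r)) (h : ZMod.castHom dd (ZMod p) a = 0) : (p : ZMod (p^r)) ∣ a := by
  haveI : NeZero (p^r) := ⟨pow_ne_zero r hp.ne_zero⟩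
  have ha : ((a.val : ℕ) : ZMod (p^r)) = a := by
    rw [ZMod.natCast_val, ZMod.cast_id]
  have h2 : ((a.val : ℕ) : ZMod p) = 0 := by
    rw [ZMod.castHom_apply] at h
    rw [ZMod.natCast_val]; exact h
  rw [ZMod.natCast_eq_zero_iff] at h2
  obtain ⟨c, hc⟩ := h2
  refine ⟨(c : ZMod (p^r)), ?_⟩
  rw [← ha, hc]; push_cast; ring

end ZModLemmas

section Binomial
variable {p : ℕ} {S : Type*} [CommRing S]

lemma binom_expand (z : S) (p : ℕ) (hp : 1 ≤ p) :
    (1 + z)^p = 1 + p * z + ∑ k ∈ Finset.Ico 2 (p+1), z^k * (p.choose k : S) := by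
  have h := add_pow z (1 : S) p
  simp only [one_pow, mul_one] at h
  rw [add_comm z 1] at h
  rw [h, Finset.range_eq_Ico]
  rw [Finset.sum_eq_sum_Ico_succ_bot (by omega : 0 < p + 1)]
  rw [Finset.sum_eq_sum_Ico_succ_bot (by omega : 1 < p + 1)]
  simp [mul_comm, add_assoc]

lemma step1 (hp : p.Prime) {j : ℕ} (hj : 1 ≤ j) {z : S} (hz : (p:S)^j ∣ z) :
    (p:S)^(j+1) ∣ ((1+z)^p - 1) := by
  rw [binom_expand z p hp.one_lt.le]
  have h1 : (1:S) + p*z + (∑ k ∈ Finset.Ico 2 (p+1), z^k * (p.choose k : S)) - 1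
      = p*z + ∑ k ∈ Finset.Ico 2 (p+1), z^k * (p.choose k : S) := by ring
  rw [h1]
  apply dvd_add
  · rw [pow_succ, mul_comm]
    exact mul_dvd_mul (by exact_mod_cast dvd_refl _) hz
  · apply Finset.dvd_sum
    intro k hk
    rw [Finset.mem_Ico] at hk
    obtain ⟨hk2, hkp⟩ := hk
    have hzk : (p:S)^(j*k) ∣ z^k := by
      obtain ⟨w, rfl⟩ := hz
      rw [mul_pow, ← pow_mul]
      exact Dvd.intro _ rfl
    rcases eq_or_lt_of_le (by omega : k ≤ p) with hkp' | hkp'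
    · subst hkp'
      apply dvd_mul_of_dvd_left
      exact (pow_dvd_pow _ (by nlinarith [hp.two_le] : j+1 ≤ j*k)).trans hzk
    · have hc : p ∣ p.choose k := Nat.Prime.dvd_choose_self hp (by omega) hkp'
      obtain ⟨c, hc⟩ := hc
      have : (p.choose k : S) = p * c := by rw [hc]; push_cast; ring
      rw [this]
      have : z^k * ((p:S) * c) = ((p:S) * z^k) * c := by ring
      rw [this]
      apply dvd_mul_of_dvd_left
      rw [pow_succ, mul_comm]
      exact mul_dvd_mul (by exact_mod_cast dvd_refl _)
        ((pow_dvd_pow _ (by nlinarith : j ≤ j*k)).trans hzk)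

lemma step2 (hp : p.Prime) (hp2 : p ≠ 2) {j : ℕ} (hj : 1 ≤ j) {z : S} (hz : (p:S)^j ∣ z)
    (h1 : (1+z)^p = 1) : (p:S)^(2*j+1) ∣ (p : S) * z := by
  have hp3 : 3 ≤ p := by
    rcases hp.two_le.lt_or_eq with h | h
    · omega
    · omega
  have hexp := binom_expand z p hp.one_lt.le
  rw [h1] at hexp
  have key : (p:S) * z = - ∑ k ∈ Finset.Ico 2 (p+1), z^k * (p.choose k : S) := by
    linear_combination -hexp
  rw [key, dvd_neg]
  apply Finset.dvd_sum
  intro k hk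
  rw [Finset.mem_Ico] at hk
  obtain ⟨hk2, hkp⟩ := hk
  have hzk : (p:S)^(j*k) ∣ z^k := by
    obtain ⟨w, rfl⟩ := hz
    rw [mul_pow, ← pow_mul]
    exact Dvd.intro _ rfl
  rcases eq_or_lt_of_le (by omega : k ≤ p) with hkp' | hkp'
  · subst hkp'
    apply dvd_mul_of_dvd_left
    exact (pow_dvd_pow _ (by nlinarith : 2*j+1 ≤ j*k)).trans hzk
  · have hc : p ∣ p.choose k := Nat.Prime.dvd_choose_self hp (by omega) hkp'
    obtain ⟨c, hc⟩ := hc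
    have h3 : (p.choose k : S) = p * c := by rw [hc]; push_cast; ring
    rw [h3]
    have h4 : z^k * ((p:S) * c) = ((p:S) * z^k) * c := by ring
    rw [h4]
    apply dvd_mul_of_dvd_left
    rw [pow_succ, mul_comm]
    exact mul_dvd_mul (by exact_mod_cast dvd_refl _)
      ((pow_dvd_pow _ (by nlinarith : 2*j ≤ j*k)).trans hzk)

lemma pow_pow (hp : p.Prime) {z : S} (hz : (p:S) ∣ z) :
    ∀ m : ℕ, ∃ w : S, (1+z)^(p^m) = 1 + w ∧ (p:S)^(m+1) ∣ w := by
  intro m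
  induction m with
  | zero => exact ⟨z, by rw [pow_zero, pow_one], by rwa [pow_one]⟩
  | succ m ih =>
    obtain ⟨w, hw, hdvd⟩ := ih
    refine ⟨(1+w)^p - 1, ?_, ?_⟩
    · rw [pow_succ, pow_mul, hw]; ring
    · exact step1 hp (by omega) hdvd

end Binomial

section BrahZMod
variable {p r : ℕ} {D : ZMod (p^r)}

lemma brah_pow_r_zero (hp : p.Prime) (hr : 1 ≤ r) : (p : Brah (ZMod (p^r)) D)^r = 0 := by
  rw [Brah.natCast_eq_C, ← map_pow, zmod_pow_r_zero hp hr, map_zero]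

lemma brah_pow_natCast (k : ℕ) :
    (p : Brah (ZMod (p^r)) D)^k = Brah.C ((p : ZMod (p^r))^k) := by
  rw [Brah.natCast_eq_C, ← map_pow]

lemma brah_ann (hp : p.Prime) (hr : 1 ≤ r) (z : Brah (ZMod (p^r)) D)
    (h : (p : Brah (ZMod (p^r)) D) * z = 0) : (p : Brah (ZMod (p^r)) D)^(r-1) ∣ z := by
  rw [brah_pow_natCast, Brah.dvd_iff]
  rw [Brah.natCast_eq_C] at h
  have h1 : (p : ZMod (p^r)) * z.re = 0 := by
    have := congrArg Brah.re h; simpa [Brah.C_mul_re] using this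
  have h2 : (p : ZMod (p^r)) * z.im = 0 := by
    have := congrArg Brah.im h; simpa [Brah.C_mul_im] using this
  exact ⟨zmod_ann hp hr _ h1, zmod_ann hp hr _ h2⟩

/-- sharp valuation lemma: a `p`-th root of unity in `1 + pA` lies in `1 + p^(r-1) A`. -/
lemma val_lemma (hp : p.Prime) (hp2 : p ≠ 2) (hr : 1 ≤ r) (z : Brah (ZMod (p^r)) D)
    (hz : (p : Brah (ZMod (p^r)) D) ∣ z) (h1 : (1+z)^p = 1) :
    (p : Brah (ZMod (p^r)) D)^(r-1) ∣ z := by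
  suffices haux : ∀ k j : ℕ, 1 ≤ j → r - 1 ≤ j + k →
      (p : Brah (ZMod (p^r)) D)^j ∣ z → (p : Brah (ZMod (p^r)) D)^(r-1) ∣ z by
    exact haux (r-1) 1 le_rfl (by omega) (by rwa [pow_one])
  intro k
  induction k with
  | zero =>
    intro j hj hjk hdvd
    exact (pow_dvd_pow _ (by omega)).trans hdvd
  | succ k ih =>
    intro j hj hjk hdvd
    by_cases hjr : r - 1 ≤ j
    · exact (pow_dvd_pow _ hjr).trans hdvd
    · push_neg at hjr
      have h2 : (p : Brah (ZMod (p^r)) D)^(2*j+1) ∣ (p : Brah (ZMod (p^r)) D) * z :=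
        step2 hp hp2 hj hdvd h1
      obtain ⟨c, hc⟩ := h2
      have hc' : (p : Brah (ZMod (p^r)) D) * (z - (p : Brah (ZMod (p^r)) D)^(2*j) * c) = 0 := by
        linear_combination hc
      have h3 : (p : Brah (ZMod (p^r)) D)^(r-1) ∣ z - (p : Brah (ZMod (p^r)) D)^(2*j) * c :=
        brah_ann hp hr _ hc'
      have h4 : (p : Brah (ZMod (p^r)) D)^(min (2*j) (r-1)) ∣ z := by
        have hz1 : (p : Brah (ZMod (p^r)) D)^(min (2*j) (r-1)) ∣
            z - (p : Brah (ZMod (p^r)) D)^(2*j) * c := (pow_dvd_pow _ (by omega)).trans h3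
        have hz2 : (p : Brah (ZMod (p^r)) D)^(min (2*j) (r-1)) ∣
            (p : Brah (ZMod (p^r)) D)^(2*j) * c :=
          dvd_mul_of_dvd_left (pow_dvd_pow _ (by omega)) _
        have := dvd_add hz1 hz2
        simpa using this
      exact ih (min (2*j) (r-1)) (by omega) (by omega) h4

end BrahZMod

section Instances
variable {R : Type*} [CommRing R] {D : R}

def brahEquiv : Brah R D ≃ R × R where
  toFun a := (a.re, a.im)
  invFun x := ⟨x.1, x.2⟩
  left_inv a := rfl
  right_inv x := rfl

instance [Fintype R] [DecidableEq R] : Fintype (Brah R D) := Fintype.ofEquiv _ (brahEquiv).symm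

lemma brah_card [Fintype R] [DecidableEq R] :
    Fintype.card (Brah R D) = Fintype.card R * Fintype.card R := by
  rw [Fintype.card_congr (brahEquiv (D := D)), Fintype.card_prod]

@[simp] lemma brah_sub_re (a b : Brah R D) : (a - b).re = a.re - b.re := by
  rw [sub_eq_add_neg, sub_eq_add_neg]; simp
@[simp] lemma brah_sub_im (a b : Brah R D) : (a - b).im = a.im - b.im := by
  rw [sub_eq_add_neg, sub_eq_add_neg]; simp

instance {R : Type*} [CommRing R] [DecidableEq R] (D : R) :
    DecidablePred (· ∈ pellConic D) :=
  fun P => inferInstanceAs (Decidable (P.1 ^ 2 - D * P.2 ^ 2 = 1))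

end Instances

section Main
variable {p r : ℕ} (dd : p ∣ p^r) (D : ZMod (p^r))

/-- reduction of `D` mod `p`. -/
def redD : ZMod p := ZMod.castHom dd (ZMod p) D

/-- reduction map from the conic to `F_p[√D]`. -/
def theta : ↥(pellConic D) →* Brah (ZMod p) (redD dd D) :=
  (Brah.map (ZMod.castHom dd (ZMod p)) rfl).toMonoidHom.comp (conicToBrah D)

lemma theta_re (x : ↥(pellConic D)) :
    (theta dd D x).re = ZMod.castHom dd (ZMod p) x.val.1 := rfl
lemma theta_im (x : ↥(pellConic D)) :
    (theta dd D x).im = ZMod.castHom dd (ZMod p) x.val.2 := rfl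

/-- reduction as a map to the units of `F_p[√D]`. -/
def psi : ↥(pellConic D) →* (Brah (ZMod p) (redD dd D))ˣ where
  toFun x := ⟨theta dd D x, theta dd D x⁻¹,
    by rw [← map_mul, mul_inv_cancel, map_one],
    by rw [← map_mul, inv_mul_cancel, map_one]⟩
  map_one' := Units.ext (by simp)
  map_mul' a b := Units.ext (by simp)

lemma psi_mem_ker_iff (x : ↥(pellConic D)) : x ∈ (psi dd D).ker ↔ theta dd D x = 1 := by
  rw [MonoidHom.mem_ker, Units.ext_iff]; rfl

lemma ker_dvd (hp : p.Prime) (hr : 1 ≤ r) (x : ↥(pellConic D)) (hx : x ∈ (psi dd D).ker) :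
    (p : Brah (ZMod (p^r)) D) ∣ (conicToBrah D x - 1) := by
  rw [psi_mem_ker_iff] at hx
  have h1 : ZMod.castHom dd (ZMod p) x.val.1 = 1 := congrArg Brah.re hx
  have h2 : ZMod.castHom dd (ZMod p) x.val.2 = 0 := congrArg Brah.im hx
  rw [Brah.natCast_eq_C, Brah.dvd_iff]
  constructor
  · have : ZMod.castHom dd (ZMod p) (x.val.1 - 1) = 0 := by rw [map_sub, h1, map_one, sub_self]
    have := zmod_p_dvd_of_cast_eq_zero hp hr dd _ this
    simpa [conicToBrah] using this
  · have := zmod_p_dvd_of_cast_eq_zero hp hr dd _ h2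
    simpa [conicToBrah] using this

/-- elements of the kernel of reduction have `p`-power order. -/
lemma ker_ppow (hp : p.Prime) (hr : 1 ≤ r) (x : ↥(pellConic D)) (hx : x ∈ (psi dd D).ker) :
    x ^ (p ^ (r-1)) = 1 := by
  have hz := ker_dvd dd D hp hr x hx
  obtain ⟨w, hw, hdvd⟩ := pow_pow hp hz (r-1)
  have hr1 : r - 1 + 1 = r := by omega
  rw [hr1, brah_pow_r_zero hp hr] at hdvd
  obtain ⟨c, hc⟩ := hdvd
  rw [zero_mul] at hc
  subst hc
  apply conicToBrah_injective D
  rw [map_pow, map_one]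
  have : conicToBrah D x = 1 + (conicToBrah D x - 1) := by ring
  rw [this, hw, add_zero]

lemma bnorm_mul {R : Type*} [CommRing R] {D : R} (a b : Brah R D) :
    (a*b).re^2 - D*(a*b).im^2 = (a.re^2 - D*a.im^2) * (b.re^2 - D*b.im^2) := by
  simp; ring

lemma F_noZeroDivisors (hp : p.Prime) (hDns : ∀ c : ZMod p, c^2 ≠ redD dd D) :
    NoZeroDivisors (Brah (ZMod p) (redD dd D)) := by
  haveI := Fact.mk hp
  constructor
  intro a b hab
  have hnorm : ∀ z : Brah (ZMod p) (redD dd D), z ≠ 0 → z.re^2 - redD dd D * z.im^2 ≠ 0 := by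
    intro z hz
    by_cases him : z.im = 0
    · have hre : z.re ≠ 0 := by
        intro h; apply hz; ext <;> simp [h, him]
      simp only [him, mul_zero, zero_pow, sub_zero, ne_eq, OfNat.ofNat_ne_zero,
        not_false_eq_true]
      exact pow_ne_zero 2 hre
    · intro h
      apply hDns (z.re * z.im⁻¹)
      have : (z.re * z.im⁻¹)^2 = z.re^2 * (z.im^2)⁻¹ := by
        rw [mul_pow, inv_pow]
      rw [this]
      have h2 : z.re^2 = redD dd D * z.im^2 := by linear_combination h
      rw [h2]
      field_simp
  by_contra hcon
  push_neg at hcon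
  have h1 := hnorm a hcon.1
  have h2 := hnorm b hcon.2
  have hbn := bnorm_mul a b
  rw [hab] at hbn
  simp only [Brah.zero_re, Brah.zero_im] at hbn
  exact (mul_ne_zero h1 h2) (by linear_combination -hbn)

/-- key torsion computation: a point of the conic with `P^p = 1` has `x = 1` and `p*y = 0`. -/
lemma torsion_one (hp : p.Prime) (hp2 : p ≠ 2) (hr : 1 ≤ r)
    (hDns : ∀ c : ZMod p, c^2 ≠ redD dd D) (x : ↥(pellConic D)) (hx : x ^ p = 1) :
    x.val.1 = 1 ∧ (p : ZMod (p^r)) * x.val.2 = 0 := by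
  haveI := Fact.mk hp
  haveI : NoZeroDivisors (Brah (ZMod p) (redD dd D)) := F_noZeroDivisors dd D hp hDns
  haveI : Nontrivial (Brah (ZMod p) (redD dd D)) := by
    refine ⟨⟨0, 1, fun h => ?_⟩⟩
    have := congrArg Brah.re h
    simp at this
  haveI : IsDomain (Brah (ZMod p) (redD dd D)) := NoZeroDivisors.to_isDomain _
  letI : Field (Brah (ZMod p) (redD dd D)) := Fintype.fieldOfDomain _
  -- first: psi x = 1
  have hker : x ∈ (psi dd D).ker := by
    have hpow : (psi dd D x) ^ p = 1 := by rw [← map_pow, hx, map_one]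
    have h1 : orderOf (psi dd D x) ∣ p := orderOf_dvd_of_pow_eq_one hpow
    have h2 : orderOf (psi dd D x) ∣ Fintype.card (Brah (ZMod p) (redD dd D))ˣ :=
      orderOf_dvd_card
    have hcard : Fintype.card (Brah (ZMod p) (redD dd D))ˣ = p * p - 1 := by
      rw [Fintype.card_units, brah_card, ZMod.card]
    rcases (Nat.Prime.eq_one_or_self_of_dvd hp _ h1) with h | h
    · rw [MonoidHom.mem_ker, ← orderOf_eq_one_iff, h]
    · exfalso
      rw [h, hcard] at h2
      have hpp : p ∣ p * p := Dvd.intro p rfl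
      have : p ∣ 1 := by
        have h3 : p * p - (p * p - 1) = 1 := by
          have hq : 1 ≤ p * p := by nlinarith [hp.two_le]
          omega
        calc p ∣ p * p - (p * p - 1) := Nat.dvd_sub hpp h2
          _ = 1 := h3
      exact Nat.Prime.one_lt hp |>.ne' (Nat.dvd_one.mp this)
  -- kernel: p ∣ z
  have hz := ker_dvd dd D hp hr x hker
  rcases Nat.lt_or_ge r 2 with hr2 | hr2
  · -- r = 1
    have hr1 : r = 1 := by omega
    subst hr1
    have hp0 : (p : ZMod (p^1)) = 0 := by
      haveI : NeZero (p^1) := ⟨pow_ne_zero 1 hp.ne_zero⟩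
      rw [ZMod.natCast_eq_zero_iff, pow_one]
    constructor
    · rw [psi_mem_ker_iff] at hker
      have h1 : ZMod.castHom dd (ZMod p) x.val.1 = 1 := congrArg Brah.re hker
      have : ZMod.castHom dd (ZMod p) (x.val.1 - 1) = 0 := by
        rw [map_sub, h1, map_one, sub_self]
      obtain ⟨c, hc⟩ := zmod_p_dvd_of_cast_eq_zero hp le_rfl dd _ this
      rw [hp0, zero_mul] at hc
      linear_combination hc
    · rw [hp0, zero_mul]
  · -- r ≥ 2
    have h1z : (1 + (conicToBrah D x - 1))^p = 1 := by
      have : (1 : Brah (ZMod (p^r)) D) + (conicToBrah D x - 1) = conicToBrah D x := by ring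
      rw [this, ← map_pow, hx, map_one]
    have hsharp := val_lemma hp hp2 hr _ hz h1z
    rw [brah_pow_natCast, Brah.dvd_iff] at hsharp
    obtain ⟨⟨a, ha⟩, ⟨b, hb⟩⟩ := hsharp
    have hxa : x.val.1 = 1 + (p : ZMod (p^r))^(r-1) * a := by
      have : (conicToBrah D x - 1).re = x.val.1 - 1 := by simp [conicToBrah]
      rw [this] at ha; linear_combination ha
    have hxb : x.val.2 = (p : ZMod (p^r))^(r-1) * b := by
      have : (conicToBrah D x - 1).im = x.val.2 := by simp [conicToBrah]
      rw [this] at hb; linear_combination hb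
    have ht2 : ((p : ZMod (p^r))^(r-1))^2 = 0 := by
      have h2r : (r-1) * 2 = r + (r - 2) := by omega
      rw [← pow_mul, h2r, pow_add, zmod_pow_r_zero hp hr, zero_mul]
    have hconic := x.property
    rw [pellConic_mem_iff, hxa, hxb] at hconic
    have h2ta : (2 : ZMod (p^r)) * ((p : ZMod (p^r))^(r-1) * a) = 0 := by
      linear_combination hconic + (D * b^2 - a^2) * ht2
    have hu2 : IsUnit (2 : ZMod (p^r)) := by
      have : ((2 : ℕ) : ZMod (p^r)) = (2 : ZMod (p^r)) := by norm_cast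
      rw [← this, ZMod.isUnit_iff_coprime]
      apply Nat.Coprime.pow_right
      rw [Nat.coprime_primes Nat.prime_two hp]
      omega
    have hta : (p : ZMod (p^r))^(r-1) * a = 0 := by
      have := hu2.mul_left_cancel (by rw [h2ta, mul_zero] : (2 : ZMod (p^r)) * ((p : ZMod (p^r))^(r-1) * a) = 2 * 0)
      exact this
    constructor
    · rw [hxa, hta, add_zero]
    · rw [hxb, ← mul_assoc]
      have : (p : ZMod (p^r)) * (p : ZMod (p^r))^(r-1) = (p : ZMod (p^r))^r := by
        rw [← pow_succ']
        congr 1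
        omega
      rw [this, zmod_pow_r_zero hp hr, zero_mul]

lemma count_p (hp : p.Prime) (hp2 : p ≠ 2) (hr : 1 ≤ r)
    (hDns : ∀ c : ZMod p, c^2 ≠ redD dd D) :
    haveI : NeZero (p^r) := ⟨pow_ne_zero r hp.ne_zero⟩
    (Finset.univ.filter fun x : ↥(pellConic D) => x ^ p = 1).card ≤ p := by
  haveI : NeZero (p^r) := ⟨pow_ne_zero r hp.ne_zero⟩
  haveI : NeZero p := ⟨hp.ne_zero⟩
  have key := Finset.card_le_card_of_injOn
    (s := Finset.univ.filter fun x : ↥(pellConic D) => x ^ p = 1)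
    (f := fun x : ↥(pellConic D) => ((x.val.2.val / p^(r-1) : ℕ) : ZMod p))
    (t := (Finset.univ : Finset (ZMod p)))
    (fun x _ => Finset.mem_univ _) ?_
  · rwa [Finset.card_univ, ZMod.card] at key
  · intro x hx y hy hxy
    rw [Finset.mem_coe, Finset.mem_filter] at hx hy
    obtain ⟨hx1, hx2⟩ := torsion_one dd D hp hp2 hr hDns x hx.2
    obtain ⟨hy1, hy2⟩ := torsion_one dd D hp hp2 hr hDns y hy.2
    have hdx : p^(r-1) ∣ x.val.2.val := zmod_ann_val hp hr _ hx2
    have hdy : p^(r-1) ∣ y.val.2.val := zmod_ann_val hp hr _ hy2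
    have hpr : p^r = p * p^(r-1) := by
      conv_lhs => rw [show r = 1 + (r-1) by omega]
      rw [pow_add, pow_one]
    have hltx : x.val.2.val / p^(r-1) < p := by
      rw [Nat.div_lt_iff_lt_mul (pow_pos hp.pos _)]
      calc x.val.2.val < p^r := ZMod.val_lt _
        _ = p * p^(r-1) := hpr
    have hlty : y.val.2.val / p^(r-1) < p := by
      rw [Nat.div_lt_iff_lt_mul (pow_pos hp.pos _)]
      calc y.val.2.val < p^r := ZMod.val_lt _
        _ = p * p^(r-1) := hpr
    have hvals : x.val.2.val / p^(r-1) = y.val.2.val / p^(r-1) := by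
      have := congrArg ZMod.val hxy
      rwa [ZMod.val_cast_of_lt hltx, ZMod.val_cast_of_lt hlty] at this
    have hv2 : x.val.2.val = y.val.2.val := by
      rw [← Nat.div_mul_cancel hdx, ← Nat.div_mul_cancel hdy, hvals]
    apply Subtype.ext
    apply Prod.ext
    · rw [hx1, hy1]
    · exact ZMod.val_injective _ hv2

lemma count_ppow (hp : p.Prime) (hp2 : p ≠ 2) (hr : 1 ≤ r)
    (hDns : ∀ c : ZMod p, c^2 ≠ redD dd D) (e : ℕ) :
    haveI : NeZero (p^r) := ⟨pow_ne_zero r hp.ne_zero⟩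
    (Finset.univ.filter fun x : ↥(pellConic D) => x ^ (p^e) = 1).card ≤ p^e := by
  haveI : NeZero (p^r) := ⟨pow_ne_zero r hp.ne_zero⟩
  induction e with
  | zero =>
    rw [pow_zero]
    calc (Finset.univ.filter fun x : ↥(pellConic D) => x ^ (p^0) = 1).card
        ≤ ({1} : Finset ↥(pellConic D)).card := by
          apply Finset.card_le_card
          intro x hx
          rw [Finset.mem_filter, pow_zero, pow_one] at hx
          rw [Finset.mem_singleton]
          exact hx.2
      _ = 1 := Finset.card_singleton 1
  | succ e ih =>
    set s := Finset.univ.filter fun x : ↥(pellConic D) => x ^ (p^(e+1)) = 1 with hs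
    set t := Finset.univ.filter fun x : ↥(pellConic D) => x ^ (p^e) = 1 with ht
    have himage : s.image (fun x => x ^ p) ⊆ t := by
      intro a ha
      rw [Finset.mem_image] at ha
      obtain ⟨x, hx, rfl⟩ := ha
      rw [hs, Finset.mem_filter] at hx
      rw [ht, Finset.mem_filter]
      refine ⟨Finset.mem_univ _, ?_⟩
      have hexp : p * p^e = p^(e+1) := (pow_succ' p e).symm
      rw [← pow_mul, hexp]
      exact hx.2
    have hfiber : ∀ a ∈ s.image (fun x => x ^ p),
        (s.filter fun x => x ^ p = a).card ≤ p := by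
      intro a ha
      rw [Finset.mem_image] at ha
      obtain ⟨x₀, hx₀, hx₀a⟩ := ha
      have hinj := Finset.card_le_card_of_injOn
        (s := s.filter fun x => x ^ p = a) (f := fun x => x₀⁻¹ * x)
        (t := Finset.univ.filter fun x : ↥(pellConic D) => x ^ p = 1) ?_ ?_
      · exact hinj.trans (count_p dd D hp hp2 hr hDns)
      · intro x hx
        rw [Finset.mem_coe, Finset.mem_filter] at hx ⊢
        refine ⟨Finset.mem_univ _, ?_⟩
        rw [mul_pow, hx.2, ← hx₀a, inv_pow, inv_mul_cancel]
      · intro x _ y _ hxy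
        exact mul_left_cancel hxy
    calc s.card ≤ p * (s.image (fun x => x ^ p)).card :=
          Finset.card_le_mul_card_image s p hfiber
      _ ≤ p * t.card := Nat.mul_le_mul_left p (Finset.card_le_card himage)
      _ ≤ p * p^e := Nat.mul_le_mul_left p ih
      _ = p^(e+1) := (pow_succ' p e).symm

lemma ker_cyclic (hp : p.Prime) (hp2 : p ≠ 2) (hr : 1 ≤ r)
    (hDns : ∀ c : ZMod p, c^2 ≠ redD dd D) :
    haveI : NeZero (p^r) := ⟨pow_ne_zero r hp.ne_zero⟩
    IsCyclic ↥(psi dd D).ker := by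
  haveI : NeZero (p^r) := ⟨pow_ne_zero r hp.ne_zero⟩
  apply isCyclic_of_card_pow_eq_one_le
  intro n hn
  have key := Finset.card_le_card_of_injOn
    (s := Finset.univ.filter fun a : ↥(psi dd D).ker => a ^ n = 1)
    (f := fun a : ↥(psi dd D).ker => (a.val : ↥(pellConic D)))
    (t := Finset.univ.filter fun x : ↥(pellConic D) => x ^ (p ^ (n.factorization p)) = 1)
    ?_ ?_
  · exact le_trans key ((count_ppow dd D hp hp2 hr hDns _).trans
      (Nat.le_of_dvd hn (Nat.ordProj_dvd n p)))
  · intro a ha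
    rw [Finset.mem_coe, Finset.mem_filter] at ha ⊢
    refine ⟨Finset.mem_univ _, ?_⟩
    have hord1 : orderOf a ∣ n := orderOf_dvd_of_pow_eq_one ha.2
    have hval : (a.val : ↥(pellConic D)) ^ (p ^ (r-1)) = 1 :=
      ker_ppow dd D hp hr a.val a.property
    have hord2 : orderOf (a.val : ↥(pellConic D)) ∣ p ^ (r-1) :=
      orderOf_dvd_of_pow_eq_one hval
    have heq : orderOf (a.val : ↥(pellConic D)) = orderOf a :=
      orderOf_injective (psi dd D).ker.subtype Subtype.coe_injective a
    rw [heq] at hord2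
    obtain ⟨k, hk, hordeq⟩ := (Nat.dvd_prime_pow hp).mp hord2
    have hkv : k ≤ n.factorization p := by
      apply (Nat.Prime.pow_dvd_iff_le_factorization hp hn.ne').mp
      rw [← hordeq]
      exact hord1
    have : orderOf (a.val : ↥(pellConic D)) ∣ p ^ (n.factorization p) := by
      rw [heq, hordeq]
      exact pow_dvd_pow p hkv
    exact orderOf_dvd_iff_pow_eq_one.mp this
  · intro x _ y _ hxy
    exact Subtype.ext hxy

lemma conic_cyclic (hp : p.Prime) (hp2 : p ≠ 2) (hr : 1 ≤ r)
    (hDns : ∀ c : ZMod p, c^2 ≠ redD dd D) :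
    haveI : NeZero (p^r) := ⟨pow_ne_zero r hp.ne_zero⟩
    IsCyclic ↥(pellConic D) := by
  haveI := Fact.mk hp
  haveI : NeZero (p^r) := ⟨pow_ne_zero r hp.ne_zero⟩
  haveI : NoZeroDivisors (Brah (ZMod p) (redD dd D)) := F_noZeroDivisors dd D hp hDns
  haveI : Nontrivial (Brah (ZMod p) (redD dd D)) := by
    refine ⟨⟨0, 1, fun h => ?_⟩⟩
    have := congrArg Brah.re h
    simp at this
  haveI : IsDomain (Brah (ZMod p) (redD dd D)) := NoZeroDivisors.to_isDomain _
  letI : Field (Brah (ZMod p) (redD dd D)) := Fintype.fieldOfDomain _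
  -- kernel side
  haveI hkc : IsCyclic ↥(psi dd D).ker := ker_cyclic dd D hp hp2 hr hDns
  obtain ⟨k, hk⟩ := hkc.exists_generator
  have hordk : orderOf k = Nat.card ↥(psi dd D).ker :=
    orderOf_eq_card_of_forall_mem_zpowers hk
  have hpgroup : IsPGroup p ↥(psi dd D).ker := by
    intro a
    refine ⟨r - 1, ?_⟩
    have := ker_ppow dd D hp hr a.val a.property
    apply Subtype.ext
    rw [SubgroupClass.coe_pow, OneMemClass.coe_one]
    exact this
  obtain ⟨aexp, hcard⟩ := (IsPGroup.iff_card).mp hpgroup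
  -- range side
  haveI hrc : IsCyclic ↥(psi dd D).range := subgroup_units_cyclic _
  obtain ⟨ζ, hζ⟩ := hrc.exists_generator
  have hordζ : orderOf ζ = Nat.card ↥(psi dd D).range :=
    orderOf_eq_card_of_forall_mem_zpowers hζ
  have hmdvd : Nat.card ↥(psi dd D).range ∣ Nat.card (Brah (ZMod p) (redD dd D))ˣ :=
    Subgroup.card_subgroup_dvd_card _
  have hcardFx : Nat.card (Brah (ZMod p) (redD dd D))ˣ = p * p - 1 := by
    rw [Nat.card_eq_fintype_card, Fintype.card_units, brah_card, ZMod.card]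
  have hpm : ¬ p ∣ Nat.card ↥(psi dd D).range := by
    intro hdvd
    have h1 : p ∣ p * p - 1 := hdvd.trans (hcardFx ▸ hmdvd)
    have hpp : p ∣ p * p := Dvd.intro p rfl
    have h3 : p * p - (p * p - 1) = 1 := by
      have hq : 1 ≤ p * p := by nlinarith [hp.two_le]
      omega
    have : p ∣ 1 := h3 ▸ Nat.dvd_sub hpp h1
    exact hp.one_lt.ne' (Nat.dvd_one.mp this)
  have hcop : Nat.Coprime p (Nat.card ↥(psi dd D).range) :=
    (Nat.Prime.coprime_iff_not_dvd hp).mpr hpm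
  have hζmem := ζ.property
  rw [MonoidHom.mem_range] at hζmem
  obtain ⟨h, hh⟩ := hζmem
  have hordζval : orderOf (ζ : (Brah (ZMod p) (redD dd D))ˣ) = orderOf ζ :=
    orderOf_injective (psi dd D).range.subtype Subtype.coe_injective ζ
  have hordψh : orderOf (psi dd D h) = Nat.card ↥(psi dd D).range := by
    rw [hh, hordζval, hordζ]
  have hordh0 : orderOf h ≠ 0 := (orderOf_pos h).ne'
  have hpe : p ^ ((orderOf h).factorization p) ∣ orderOf h := Nat.ordProj_dvd _ _
  set e := (orderOf h).factorization p with he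
  set h' := h ^ (p^e) with hh'
  set m := Nat.card ↥(psi dd D).range with hm
  have hordh' : orderOf h' = orderOf h / p^e := by
    rw [hh', orderOf_pow, Nat.gcd_eq_right hpe]
  have hcoph' : Nat.Coprime p (orderOf h') := by
    rw [hordh']
    exact Nat.coprime_ordCompl hp hordh0
  have hmdvdh : m ∣ orderOf h := hordψh ▸ orderOf_map_dvd (psi dd D) h
  have hmdvdh' : m ∣ orderOf h' := by
    rw [hordh']
    refine Nat.Coprime.dvd_of_dvd_mul_left (Nat.Coprime.pow_right e hcop.symm) ?_
    rw [Nat.ordProj_mul_ordCompl_eq_self (orderOf h) p]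
    exact hmdvdh
  have hψm : (psi dd D h) ^ m = 1 := by
    rw [← hordψh]
    exact pow_orderOf_eq_one _
  have hh'm : h' ^ m ∈ (psi dd D).ker := by
    rw [MonoidHom.mem_ker, map_pow, hh', map_pow, ← pow_mul, mul_comm, pow_mul, hψm, one_pow]
  have hordh'm : orderOf h' ∣ m := by
    have h1 := ker_ppow dd D hp hr _ hh'm
    rw [← pow_mul] at h1
    have h2 : orderOf h' ∣ m * p^(r-1) := orderOf_dvd_of_pow_eq_one h1
    exact Nat.Coprime.dvd_of_dvd_mul_right (Nat.Coprime.pow_right (r-1) hcoph'.symm) h2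
  have hordh'_eq : orderOf h' = m := Nat.dvd_antisymm hordh'm hmdvdh'
  -- combine
  have hordk' : orderOf ((k : ↥(psi dd D).ker) : ↥(pellConic D)) = p^aexp := by
    have hoi := orderOf_injective (psi dd D).ker.subtype Subtype.coe_injective k
    rw [show ((k : ↥(psi dd D).ker) : ↥(pellConic D)) = (psi dd D).ker.subtype k from rfl,
      hoi, hordk, hcard]
  have hcop2 : Nat.Coprime (orderOf ((k : ↥(psi dd D).ker) : ↥(pellConic D))) (orderOf h') := by
    rw [hordk', hordh'_eq]
    exact Nat.Coprime.pow_left aexp hcop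
  apply isCyclic_of_orderOf_eq_card (((k : ↥(psi dd D).ker) : ↥(pellConic D)) * h')
  rw [(Commute.all _ _).orderOf_mul_eq_mul_orderOf_of_coprime hcop2, hordk', hordh'_eq]
  have hcardH : Nat.card ↥(pellConic D) = m * Nat.card ↥(psi dd D).ker := by
    rw [Subgroup.card_eq_card_quotient_mul_card_subgroup (psi dd D).ker]
    congr 1
    exact Nat.card_congr (QuotientGroup.quotientKerEquivRange (psi dd D)).toEquiv
  rw [hcardH, hcard]
  ring

end Main

/-- For an odd prime `p`, `r ≥ 1`, and a unit `D ∈ ℤ/p^rℤ` whose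
reduction modulo `p` is a non-square in `ℤ/pℤ`, the group `(H_{D,ℤ/p^rℤ}, ⊗)` is cyclic:
some point of the conic generates all solutions of `x² − D y² = 1` as its `⊗`-powers. -/
theorem pellConic_cyclic_prime_pow (p : ℕ) (hp : p.Prime) (hp2 : p ≠ 2) (r : ℕ) (hr : 1 ≤ r)
    (D : ZMod (p ^ r)) (hDu : IsUnit D)
    (hD : ∀ c : ZMod p, c ^ 2 ≠
      ZMod.castHom (dvd_pow_self p (Nat.one_le_iff_ne_zero.mp hr)) (ZMod p) D) :
    ∃ G ∈ pellConic D, ∀ P ∈ pellConic D, ∃ n : ℕ, pellPow D G n = P := by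
  haveI : NeZero (p^r) := ⟨pow_ne_zero r hp.ne_zero⟩
  have hcyc : IsCyclic ↥(pellConic D) :=
    conic_cyclic (dvd_pow_self p (Nat.one_le_iff_ne_zero.mp hr)) D hp hp2 hr hD
  obtain ⟨g, hg⟩ := hcyc.exists_generator
  refine ⟨g.val, g.property, ?_⟩
  intro P hP
  have hmem := hg ⟨P, hP⟩
  rw [← mem_powers_iff_mem_zpowers] at hmem
  rw [Submonoid.mem_powers_iff] at hmem
  obtain ⟨n, hn⟩ := hmem
  exact ⟨n, by rw [pellPow_eq_pow, hn]⟩
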